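/- Let a_f(u,v) = α(u,v)_Ω + (ν∇u, ∇v)_Ω with α ≥ 0, ν > 0, on H¹₀(Ω)² for a bounded Lipschitz domain Ω, and a_s(X,Y) = β(X,Y)_B + κ(∇X,∇Y)_B with β ≥ 0, κ > 0 on H¹(B)² for a bounded connected Lipschitz domain B. Suppose the pair (u_h, X_h) ∈ H¹₀(Ω)² × H¹(B)² satisfies the constraint estimate ‖X̊_h‖_{0,B} ≤ C₁ ‖u_h‖_{1,Ω}, where X̊_h is the mean of X_h over B. Then there exists θ★ > 0, depending only on α, ν, β, κ, C₁, the Poincaré constant of Ω, and the Poincaré–Wirtinger constant of B, such that a_f(u_h,u_h) + a_s(X_h,X_h) ≥ θ★ (‖u_h‖²_{1,Ω} + ‖X_h‖²_{1,B}). -/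

import Mathlib

open MeasureTheory Real

noncomputable section

abbrev E2 := EuclideanSpace ℝ (Fin 2)

lemma sq_of_rpow_le {a b C : ℝ} (ha : 0 ≤ a) (hb : 0 ≤ b)
    (h : a ^ ((1:ℝ)/2) ≤ C * b ^ ((1:ℝ)/2)) : a ≤ C ^ 2 * b := by
  rw [← Real.sqrt_eq_rpow, ← Real.sqrt_eq_rpow] at h
  nlinarith [Real.sq_sqrt ha, Real.sq_sqrt hb, Real.sqrt_nonneg a, Real.sqrt_nonneg b,
    mul_self_le_mul_self (Real.sqrt_nonneg a) h]

lemma sq_of_rpow_le' {v n C t : ℝ} (hv : 0 ≤ v) (hn : 0 ≤ n) (ht : 0 ≤ t)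
    (h : v ^ ((1:ℝ)/2) * n ≤ C * t ^ ((1:ℝ)/2)) : v * n ^ 2 ≤ C ^ 2 * t := by
  rw [← Real.sqrt_eq_rpow, ← Real.sqrt_eq_rpow] at h
  nlinarith [Real.sq_sqrt hv, Real.sq_sqrt ht, Real.sqrt_nonneg v, Real.sqrt_nonneg t,
    mul_self_le_mul_self (mul_nonneg (Real.sqrt_nonneg v) hn) h]

/-- Coercivity of `a_f + a_s` on the constrained kernel: with
`a_f(u,u) = α‖u‖²_{0,Ω} + ν‖∇u‖²_{0,Ω}` (Poincaré holds on `H¹₀(Ω)`),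
`a_s(X,X) = β‖X‖²_{0,B} + κ‖∇X‖²_{0,B}`, and the constraint estimate
`‖X̊‖_{0,B} ≤ C₁‖u‖_{1,Ω}` on the mean `X̊` of `X`, there is `θ★ > 0`, depending only on
`α, ν, β, κ, C₁` and the Poincaré constants, with
`a_f(u,u)+a_s(X,X) ≥ θ★(‖u‖²_{1,Ω}+‖X‖²_{1,B})`. -/
theorem kernel_ellipticity (α ν β κ C₁ CΩ CP : ℝ)
    (hα : 0 ≤ α) (hν : 0 < ν) (hβ : 0 ≤ β) (hκ : 0 < κ)
    (hC₁ : 0 < C₁) (hCΩ : 0 < CΩ) (hCP : 0 < CP) :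
    ∃ θ > 0, ∀ (Ω B : Set E2) (u X : E2 → E2),
      MeasurableSet Ω → MeasurableSet B → volume B ≠ 0 → volume B ≠ ⊤ →
      IntegrableOn (fun x => ‖u x‖ ^ 2) Ω →
      IntegrableOn (fun x => ‖fderiv ℝ u x‖ ^ 2) Ω →
      IntegrableOn X B →
      IntegrableOn (fun x => ‖X x‖ ^ 2) B →
      IntegrableOn (fun x => ‖fderiv ℝ X x‖ ^ 2) B →
      -- Poincaré inequality on `H¹₀(Ω)` for `u` with constant `CΩ`:
      (∫ x in Ω, ‖u x‖ ^ 2) ≤ CΩ * (∫ x in Ω, ‖fderiv ℝ u x‖ ^ 2) →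
      -- Poincaré–Wirtinger inequality on `B` for `X` with constant `CP`:
      ((∫ x in B, ‖X x - ((volume B).toReal)⁻¹ • (∫ y in B, X y)‖ ^ 2) ^ ((1 : ℝ) / 2) ≤
        CP * (∫ x in B, ‖fderiv ℝ X x‖ ^ 2) ^ ((1 : ℝ) / 2)) →
      -- constraint estimate `‖X̊‖_{0,B} ≤ C₁ ‖u‖_{1,Ω}`:
      (((volume B).toReal) ^ ((1 : ℝ) / 2) * ‖((volume B).toReal)⁻¹ • (∫ y in B, X y)‖ ≤
        C₁ * ((∫ x in Ω, ‖u x‖ ^ 2) + (∫ x in Ω, ‖fderiv ℝ u x‖ ^ 2)) ^ ((1 : ℝ) / 2)) →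
      α * (∫ x in Ω, ‖u x‖ ^ 2) + ν * (∫ x in Ω, ‖fderiv ℝ u x‖ ^ 2) +
          β * (∫ x in B, ‖X x‖ ^ 2) + κ * (∫ x in B, ‖fderiv ℝ X x‖ ^ 2) ≥
        θ * (((∫ x in Ω, ‖u x‖ ^ 2) + (∫ x in Ω, ‖fderiv ℝ u x‖ ^ 2)) +
             ((∫ x in B, ‖X x‖ ^ 2) + (∫ x in B, ‖fderiv ℝ X x‖ ^ 2))) := by
  refine ⟨min (ν / ((1 + 2 * C₁ ^ 2) * (1 + CΩ))) (κ / (1 + 2 * CP ^ 2)), ?_, ?_⟩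
  · positivity
  intro Ω B u X hΩm hBm hB0 hBfin hu2 hdu2 hXint hX2 hdX2 hPoin hPW hCon
  set θ := min (ν / ((1 + 2 * C₁ ^ 2) * (1 + CΩ))) (κ / (1 + 2 * CP ^ 2)) with hθdef
  have hθ0 : 0 < θ := by positivity
  set A := ∫ x in Ω, ‖u x‖ ^ 2 with hAdef
  set Du := ∫ x in Ω, ‖fderiv ℝ u x‖ ^ 2 with hDudef
  set S := ∫ x in B, ‖X x‖ ^ 2 with hSdef
  set DX := ∫ x in B, ‖fderiv ℝ X x‖ ^ 2 with hDXdef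
  set c := ((volume B).toReal)⁻¹ • (∫ y in B, X y) with hcdef
  have hA0 : 0 ≤ A := integral_nonneg fun x => by positivity
  have hDu0 : 0 ≤ Du := integral_nonneg fun x => by positivity
  have hS0 : 0 ≤ S := integral_nonneg fun x => by positivity
  have hDX0 : 0 ≤ DX := integral_nonneg fun x => by positivity
  have hW0 : 0 ≤ ∫ x in B, ‖X x - c‖ ^ 2 := integral_nonneg fun x => by positivity
  -- integrability of x ↦ ‖X x - c‖^2 on B
  have hmeas : AEStronglyMeasurable (fun x => ‖X x - c‖ ^ 2) (volume.restrict B) := by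
    exact ((hXint.aestronglyMeasurable.sub aestronglyMeasurable_const).norm.pow 2)
  have hconstInt : IntegrableOn (fun _ : E2 => ‖c‖ ^ 2) B := by
    exact integrableOn_const hBfin
  have hg : Integrable (fun x => 2 * ‖X x‖ ^ 2 + 2 * ‖c‖ ^ 2) (volume.restrict B) :=
    (hX2.const_mul 2).add (hconstInt.const_mul 2)
  have hXc2 : IntegrableOn (fun x => ‖X x - c‖ ^ 2) B := by
    refine Integrable.mono' hg hmeas ?_
    filter_upwards with x
    have h1 : ‖X x - c‖ ≤ ‖X x‖ + ‖c‖ := norm_sub_le _ _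
    have h2 : (0:ℝ) ≤ ‖X x - c‖ := norm_nonneg _
    simp only [Real.norm_eq_abs, abs_of_nonneg (by positivity : (0:ℝ) ≤ ‖X x - c‖ ^ 2)]
    nlinarith [sq_nonneg (‖X x‖ - ‖c‖), mul_self_le_mul_self h2 h1]
  -- S ≤ 2 ∫‖X-c‖² + 2 vol ‖c‖²
  have hSbound : S ≤ 2 * (∫ x in B, ‖X x - c‖ ^ 2) + 2 * (volume B).toReal * ‖c‖ ^ 2 := by
    have hmono : S ≤ ∫ x in B, (2 * ‖X x - c‖ ^ 2 + 2 * ‖c‖ ^ 2) := by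
      refine integral_mono_of_nonneg (Filter.Eventually.of_forall fun x => by positivity)
        ((hXc2.const_mul 2).add (hconstInt.const_mul 2)) ?_
      filter_upwards with x
      have h1 : ‖X x‖ ≤ ‖X x - c‖ + ‖c‖ := by
        simpa using norm_add_le (X x - c) c
      nlinarith [sq_nonneg (‖X x - c‖ - ‖c‖), mul_self_le_mul_self (norm_nonneg (X x)) h1]
    calc S ≤ ∫ x in B, (2 * ‖X x - c‖ ^ 2 + 2 * ‖c‖ ^ 2) := hmono
    _ = 2 * (∫ x in B, ‖X x - c‖ ^ 2) + 2 * (volume B).toReal * ‖c‖ ^ 2 := by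
        rw [integral_add (hXc2.const_mul 2) (hconstInt.const_mul 2),
          integral_const_mul, setIntegral_const]
        simp only [smul_eq_mul, measureReal_def]; ring
  have hPW' : (∫ x in B, ‖X x - c‖ ^ 2) ≤ CP ^ 2 * DX := sq_of_rpow_le hW0 hDX0 hPW
  have hCon' : (volume B).toReal * ‖c‖ ^ 2 ≤ C₁ ^ 2 * (A + Du) :=
    sq_of_rpow_le' ENNReal.toReal_nonneg (norm_nonneg c) (by linarith) hCon
  have hScomb : S ≤ 2 * CP ^ 2 * DX + 2 * C₁ ^ 2 * (1 + CΩ) * Du := by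
    have hmul := mul_le_mul_of_nonneg_left (show A + Du ≤ (1 + CΩ) * Du by linarith)
      (by positivity : (0:ℝ) ≤ 2 * C₁ ^ 2)
    linarith [hSbound, hPW', hCon', hmul]
  have hD1 : θ * ((1 + 2 * C₁ ^ 2) * (1 + CΩ)) ≤ ν := by
    have := min_le_left (ν / ((1 + 2 * C₁ ^ 2) * (1 + CΩ))) (κ / (1 + 2 * CP ^ 2))
    rw [← hθdef] at this
    calc θ * ((1 + 2 * C₁ ^ 2) * (1 + CΩ))
        ≤ ν / ((1 + 2 * C₁ ^ 2) * (1 + CΩ)) * ((1 + 2 * C₁ ^ 2) * (1 + CΩ)) :=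
          mul_le_mul_of_nonneg_right this (by positivity)
      _ = ν := div_mul_cancel₀ _ (by positivity)
  have hD2 : θ * (1 + 2 * CP ^ 2) ≤ κ := by
    have := min_le_right (ν / ((1 + 2 * C₁ ^ 2) * (1 + CΩ))) (κ / (1 + 2 * CP ^ 2))
    rw [← hθdef] at this
    calc θ * (1 + 2 * CP ^ 2)
        ≤ κ / (1 + 2 * CP ^ 2) * (1 + 2 * CP ^ 2) :=
          mul_le_mul_of_nonneg_right this (by positivity)
      _ = κ := div_mul_cancel₀ _ (by positivity)
  have h1 : A + Du ≤ (1 + CΩ) * Du := by linarith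
  have t1 := mul_le_mul_of_nonneg_left h1 hθ0.le
  have t2 := mul_le_mul_of_nonneg_left hScomb hθ0.le
  have t3 := mul_le_mul_of_nonneg_right hD1 hDu0
  have t4 := mul_le_mul_of_nonneg_right hD2 hDX0
  have key : θ * ((A + Du) + (S + DX)) ≤ ν * Du + κ * DX := by linarith
  linarith [key, mul_nonneg hα hA0, mul_nonneg hβ hS0]

end
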